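/- arXiv:math/0501271 — 10 statements merged into one kernel-verified Lean document; each statement's English description precedes it below -/
import Mathlib

section
/- (Lambek–Carlitz characterization of completely multiplicative arithmetical functions, Theorem 1.1.) For an arithmetical function f : ℤ⁺ → ℂ, the following statements are equivalent: (1) f is completely multiplicative, i.e. f(mn) = f(m)·f(n) for all m, n ∈ ℤ⁺; (2) f·(g *_D h) = (f·g) *_D (f·h) for all arithmetical functions g and h, where f·g denotes the pointwise product; (3) f·(g *_D g) = (f·g) *_D (f·g) for every arithmetical function g; (4) f·τ = f *_D f, where τ = ζ *_D ζ is the number-of-divisors function. -/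
open Finset


/-- The Dirichlet convolution of two arithmetical functions
`(f *_D g)(n) = ∑_{d ∣ n} f(d) g(n/d)`. -/
noncomputable def dirichletConv (f g : ℕ → ℂ) : ℕ → ℂ :=
  fun n => ∑ d ∈ n.divisors, f d * g (n / d)

/-- The arithmetical function `ζ`, with `ζ(n) = 1` for all `n ∈ ℤ⁺`. -/
def zetaFn : ℕ → ℂ := fun _ => 1

/-- `τ = ζ *_D ζ`, the number-of-divisors function. -/
noncomputable def tauFn : ℕ → ℂ := dirichletConv zetaFn zetaFn

lemma tauFn_eq (n : ℕ) : tauFn n = (n.divisors.card : ℂ) := by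
  simp [tauFn, dirichletConv, zetaFn]

noncomputable def Ff (f : ℕ → ℂ) (n : ℕ) : ℂ := n.factorization.prod fun p a => f p ^ a

lemma Ff_one (f : ℕ → ℂ) : Ff f 1 = 1 := by simp [Ff]

lemma Ff_mul (f : ℕ → ℂ) {m n : ℕ} (hm : m ≠ 0) (hn : n ≠ 0) :
    Ff f (m * n) = Ff f m * Ff f n := by
  unfold Ff
  rw [Nat.factorization_mul hm hn]
  exact Finsupp.prod_add_index' (by simp) (fun p a b => pow_add _ _ _)

lemma Ff_prime (f : ℕ → ℂ) {p : ℕ} (hp : p.Prime) : Ff f p = f p := by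
  simp [Ff, hp.factorization, Finsupp.prod_single_index]

lemma key_one (f : ℕ → ℂ) (h1 : f 1 = 1)
    (h4 : ∀ n : ℕ, 0 < n → f n * tauFn n = dirichletConv f f n) :
    ∀ n : ℕ, 0 < n → f n = Ff f n := by
  intro n
  induction n using Nat.strong_induction_on with
  | _ n ih =>
    intro hn
    rcases eq_or_lt_of_le (show 1 ≤ n from hn) with h1n | h1n
    · rw [← h1n, Ff_one]; exact h1.symm ▸ h1
    by_cases hp : n.Prime
    · rw [Ff_prime f hp]
    -- n composite, n > 1
    obtain ⟨d, hdvd, hd2, hdn⟩ := Nat.exists_dvd_of_not_prime2 h1n hp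
    have hne : (1 : ℕ) ≠ n := by omega
    have hsub : ({1, n} : Finset ℕ) ⊆ n.divisors := by
      intro x hx
      simp only [mem_insert, mem_singleton] at hx
      rcases hx with rfl | rfl
      · exact Nat.one_mem_divisors.2 (by omega)
      · exact Nat.mem_divisors_self _ (by omega)
    have hcard3 : 3 ≤ n.divisors.card := by
      have : ({1, d, n} : Finset ℕ) ⊆ n.divisors := by
        intro x hx
        simp only [mem_insert, mem_singleton] at hx
        rcases hx with rfl | rfl | rfl
        · exact Nat.one_mem_divisors.2 (by omega)
        · exact Nat.mem_divisors.2 ⟨hdvd, by omega⟩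
        · exact Nat.mem_divisors_self _ (by omega)
      calc 3 = ({1, d, n} : Finset ℕ).card := by
                rw [card_insert_of_notMem (by simp; omega),
                    card_insert_of_notMem (by simp; omega), card_singleton]
           _ ≤ _ := card_le_card this
    have heq := h4 n hn
    rw [tauFn_eq] at heq
    have hsplit : dirichletConv f f n
        = (∑ x ∈ n.divisors \ {1, n}, f x * f (n / x)) + ∑ x ∈ ({1, n} : Finset ℕ), f x * f (n / x) := by
      rw [dirichletConv, Finset.sum_sdiff hsub]
    have hpair : ∑ x ∈ ({1, n} : Finset ℕ), f x * f (n / x) = 2 * f n := by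
      rw [Finset.sum_pair hne]
      simp [h1, Nat.div_self (show 0 < n by omega)]
      ring
    have hmid : ∀ x ∈ n.divisors \ {1, n}, f x * f (n / x) = Ff f n := by
      intro x hx
      simp only [mem_sdiff, Nat.mem_divisors, mem_insert, mem_singleton] at hx
      obtain ⟨⟨hxd, hn0⟩, hx1n⟩ := hx
      have hx1 : 1 < x := by
        rcases Nat.lt_or_ge x 2 with h | h
        · interval_cases x
          · exact absurd (Nat.eq_zero_of_zero_dvd hxd) (by omega)
          · exact absurd rfl (fun h => hx1n (Or.inl h))
        · omega
      have hxn : x < n := by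
        rcases Nat.lt_or_ge x n with h | h
        · exact h
        · have := Nat.le_of_dvd hn hxd
          have : x = n := by omega
          exact absurd this (fun h => hx1n (Or.inr h))
      have hq0 : 0 < n / x := Nat.div_pos (Nat.le_of_dvd hn hxd) (by omega)
      have hqn : n / x < n := Nat.div_lt_self hn hx1
      rw [ih x hxn (by omega), ih (n / x) hqn hq0, ← Ff_mul f (by omega) (by omega),
        Nat.mul_div_cancel' hxd]
    rw [hsplit, hpair, Finset.sum_congr rfl hmid, Finset.sum_const, nsmul_eq_mul] at heq
    -- heq : f n * card = (card - 2) * Ff f n + 2 * f n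
    have hcardc : ((n.divisors \ {1, n}).card : ℂ) = (n.divisors.card : ℂ) - 2 := by
      rw [Finset.card_sdiff_of_subset hsub]
      have : ({1, n} : Finset ℕ).card = 2 := by rw [Finset.card_pair hne]
      rw [this]
      push_cast [Nat.cast_sub (by omega : 2 ≤ n.divisors.card)]
      ring
    rw [hcardc] at heq
    have hfactor : ((n.divisors.card : ℂ) - 2) * (f n - Ff f n) = 0 := by ring_nf; linear_combination heq
    have hne2 : ((n.divisors.card : ℂ) - 2) ≠ 0 := by
      intro h
      have : (n.divisors.card : ℂ) = 2 := by linear_combination h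
      have : n.divisors.card = 2 := by exact_mod_cast this
      omega
    have := mul_eq_zero.1 hfactor
    rcases this with h | h
    · exact absurd h hne2
    · linear_combination h

lemma key_zero (f : ℕ → ℂ) (h1 : f 1 = 0)
    (h4 : ∀ n : ℕ, 0 < n → f n * tauFn n = dirichletConv f f n) :
    ∀ n : ℕ, 0 < n → f n = 0 := by
  intro n
  induction n using Nat.strong_induction_on with
  | _ n ih =>
    intro hn
    rcases eq_or_lt_of_le (show 1 ≤ n from hn) with h1n | h1n
    · rw [← h1n]; exact h1
    have heq := h4 n hn
    have hzero : dirichletConv f f n = 0 := by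
      rw [dirichletConv]
      apply Finset.sum_eq_zero
      intro x hx
      obtain ⟨hxd, hn0⟩ := Nat.mem_divisors.1 hx
      rcases Nat.lt_or_ge x n with h | h
      · have hx0 : 0 < x := Nat.pos_of_dvd_of_pos hxd hn
        rw [ih x h hx0, zero_mul]
      · have : x = n := le_antisymm (Nat.le_of_dvd hn hxd) h
        subst this
        rw [Nat.div_self hn, h1, mul_zero]
    rw [hzero, tauFn_eq] at heq
    have hcard : (n.divisors.card : ℂ) ≠ 0 := by
      have : n.divisors.Nonempty := Nat.nonempty_divisors.2 (by omega)
      exact_mod_cast Finset.card_ne_zero_of_mem this.choose_spec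
    exact (mul_eq_zero.1 heq).resolve_right hcard

/-- Lambek–Carlitz characterization of completely multiplicative arithmetical
functions (Theorem 1.1). -/
theorem stmt_0 (f : ℕ → ℂ) :
    [(∀ m n : ℕ, 0 < m → 0 < n → f (m * n) = f m * f n),
     (∀ g h : ℕ → ℂ, ∀ n : ℕ, 0 < n →
        f n * dirichletConv g h n
          = dirichletConv (fun k => f k * g k) (fun k => f k * h k) n),
     (∀ g : ℕ → ℂ, ∀ n : ℕ, 0 < n →
        f n * dirichletConv g g n
          = dirichletConv (fun k => f k * g k) (fun k => f k * g k) n),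
     (∀ n : ℕ, 0 < n → f n * tauFn n = dirichletConv f f n)].TFAE := by
  tfae_have 1 → 2 := by
    intro hcm g h n hn
    rw [dirichletConv, dirichletConv, Finset.mul_sum]
    refine Finset.sum_congr rfl fun d hd => ?_
    obtain ⟨hdvd, hn0⟩ := Nat.mem_divisors.1 hd
    have hd0 : 0 < d := Nat.pos_of_dvd_of_pos hdvd hn
    have hq0 : 0 < n / d := Nat.div_pos (Nat.le_of_dvd hn hdvd) hd0
    have : f n = f d * f (n / d) := by
      rw [← hcm d (n / d) hd0 hq0, Nat.mul_div_cancel' hdvd]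
    rw [this]; ring
  tfae_have 2 → 3 := fun h g => h g g
  tfae_have 3 → 4 := by
    intro h n hn
    have := h zetaFn n hn
    simpa [tauFn, zetaFn] using this
  tfae_have 4 → 1 := by
    intro h4 m n hm hn
    have h1 := h4 1 one_pos
    rw [tauFn_eq] at h1
    simp [dirichletConv] at h1
    -- h1 : f 1 = f 1 * f 1
    have hsq : f 1 * (f 1 - 1) = 0 := by linear_combination -h1
    rcases mul_eq_zero.1 hsq with h0 | h0
    · have hz := key_zero f h0 h4
      rw [hz (m * n) (by positivity), hz m hm, hz n hn, mul_zero]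
    · have hone : f 1 = 1 := by linear_combination h0
      have hk := key_one f hone h4
      rw [hk (m * n) (by positivity), hk m hm, hk n hn, Ff_mul f (by omega) (by omega)]
  tfae_finish
end

section
/- (Theorem 1.2, additive version of the Lambek–Carlitz characterization.) For an arithmetical function f : ℤ⁺ → ℂ, the following statements are equivalent: (1) f is completely additive, i.e. f(mn) = f(m) + f(n) for all m, n ∈ ℤ⁺; (2) f·(g *_D h) = (f·g) *_D h + g *_D (f·h) for all arithmetical functions g and h; (3) f·(g *_D g) = 2·((f·g) *_D g) for every arithmetical function g; (4) f·τ = 2·(f *_D ζ). -/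
private lemma dconv_comm (a b : ℕ → ℂ) (n : ℕ) :
    dirichletConv a b n = dirichletConv b a n := by
  unfold dirichletConv
  rw [← Nat.sum_div_divisors n (fun d => b d * a (n / d))]
  refine Finset.sum_congr rfl fun d hd => ?_
  obtain ⟨hdvd, hn⟩ := Nat.mem_divisors.mp hd
  rw [Nat.div_div_self hdvd hn, mul_comm]

private def Fadd (f : ℕ → ℂ) : ℕ → ℂ := fun n => ((n.primeFactorsList).map f).sum

private lemma Fadd_mul (f : ℕ → ℂ) {m n : ℕ} (hm : 0 < m) (hn : 0 < n) :
    Fadd f (m * n) = Fadd f m + Fadd f n := by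
  unfold Fadd
  rw [(Nat.perm_primeFactorsList_mul hm.ne' hn.ne').map f |>.sum_eq, List.map_append,
    List.sum_append]

private lemma Fadd_sum (f : ℕ → ℂ) {n : ℕ} (hn : 0 < n) :
    2 * ∑ d ∈ n.divisors, Fadd f d = (n.divisors.card : ℂ) * Fadd f n := by
  have h1 : ∑ d ∈ n.divisors, (Fadd f d + Fadd f (n / d)) = (n.divisors.card : ℂ) * Fadd f n := by
    rw [Finset.sum_congr rfl (fun d hd => ?_), Finset.sum_const, nsmul_eq_mul]
    obtain ⟨hdvd, _⟩ := Nat.mem_divisors.mp hd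
    have hd0 : 0 < d := Nat.pos_of_mem_divisors hd
    have hnd : 0 < n / d := Nat.div_pos (Nat.le_of_dvd hn hdvd) hd0
    rw [← Fadd_mul f hd0 hnd, Nat.mul_div_cancel' hdvd]
  rw [← h1, Finset.sum_add_distrib, Nat.sum_div_divisors n (Fadd f), two_mul]

private lemma card_ge_three {n : ℕ} (hn : 0 < n) (h1 : n ≠ 1) (hp : ¬ n.Prime) :
    3 ≤ n.divisors.card := by
  have hpf : n.minFac.Prime := Nat.minFac_prime h1
  have hsub : ({1, n.minFac, n} : Finset ℕ) ⊆ n.divisors := by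
    intro x hx
    simp only [Finset.mem_insert, Finset.mem_singleton] at hx
    rcases hx with rfl | rfl | rfl
    · simp [Nat.mem_divisors, hn.ne']
    · exact Nat.mem_divisors.mpr ⟨Nat.minFac_dvd n, hn.ne'⟩
    · simp [Nat.mem_divisors, hn.ne']
  have hne1 : (1 : ℕ) ≠ n.minFac := fun h => hpf.ne_one h.symm
  have hnen : n.minFac ≠ n := fun h => hp (h ▸ hpf)
  have h1n : (1 : ℕ) ≠ n := Ne.symm h1
  calc 3 = ({1, n.minFac, n} : Finset ℕ).card := by
        rw [Finset.card_insert_of_notMem (by simp [hne1, h1n]),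
          Finset.card_insert_of_notMem (by simp [hnen]), Finset.card_singleton]
    _ ≤ n.divisors.card := Finset.card_le_card hsub

/-- Theorem 1.2 (additive version of the Lambek–Carlitz characterization):
characterization of completely additive arithmetical functions. -/
theorem stmt_1 (f : ℕ → ℂ) :
    [(∀ m n : ℕ, 0 < m → 0 < n → f (m * n) = f m + f n),
     (∀ g h : ℕ → ℂ, ∀ n : ℕ, 0 < n →
        f n * dirichletConv g h n
          = dirichletConv (fun k => f k * g k) h n
              + dirichletConv g (fun k => f k * h k) n),
     (∀ g : ℕ → ℂ, ∀ n : ℕ, 0 < n →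
        f n * dirichletConv g g n
          = 2 * dirichletConv (fun k => f k * g k) g n),
     (∀ n : ℕ, 0 < n → f n * tauFn n = 2 * dirichletConv f zetaFn n)].TFAE := by
  tfae_have 1 → 2 := by
    intro h1 g h n hn
    unfold dirichletConv
    rw [Finset.mul_sum, ← Finset.sum_add_distrib]
    refine Finset.sum_congr rfl fun d hd => ?_
    obtain ⟨hdvd, _⟩ := Nat.mem_divisors.mp hd
    have hd0 : 0 < d := Nat.pos_of_mem_divisors hd
    have hnd : 0 < n / d := Nat.div_pos (Nat.le_of_dvd hn hdvd) hd0
    have : f n = f d + f (n / d) := by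
      rw [← h1 d (n / d) hd0 hnd, Nat.mul_div_cancel' hdvd]
    rw [this]; ring
  tfae_have 2 → 3 := by
    intro h2 g n hn
    rw [h2 g g n hn, dconv_comm g (fun k => f k * g k) n, two_mul]
  tfae_have 3 → 4 := by
    intro h3 n hn
    have := h3 zetaFn n hn
    unfold tauFn
    rw [this]
    congr 1
    unfold dirichletConv zetaFn
    simp
  tfae_have 4 → 1 := by
    intro h4
    have hf1 : f 1 = 0 := by
      have := h4 1 one_pos
      unfold tauFn dirichletConv zetaFn at this
      simp at this
      linear_combination -this
    have key : ∀ n : ℕ, 0 < n → f n = Fadd f n := by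
      intro n
      induction n using Nat.strong_induction_on with
      | _ n ih =>
        intro hn
        by_cases h1 : n = 1
        · subst h1
          simp [hf1, Fadd]
        by_cases hp : n.Prime
        · unfold Fadd
          rw [Nat.primeFactorsList_prime hp]
          simp
        · -- use the equation
          have heq := h4 n hn
          have htau : tauFn n = (n.divisors.card : ℂ) := by
            unfold tauFn dirichletConv zetaFn; simp
          have hsum : dirichletConv f zetaFn n = ∑ d ∈ n.divisors, f d := by
            unfold dirichletConv zetaFn; simp
          rw [htau, hsum] at heq
          -- split off d = n
          have hins : insert n n.properDivisors = n.divisors :=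
            Nat.insert_self_properDivisors hn.ne'
          have hsplit : ∑ d ∈ n.divisors, f d
              = f n - Fadd f n + ∑ d ∈ n.divisors, Fadd f d := by
            rw [← hins, Finset.sum_insert (by simp [Nat.mem_properDivisors]),
              Finset.sum_insert (by simp [Nat.mem_properDivisors])]
            have : ∑ d ∈ n.properDivisors, f d = ∑ d ∈ n.properDivisors, Fadd f d := by
              refine Finset.sum_congr rfl fun d hd => ?_
              exact ih d (Nat.mem_properDivisors.mp hd).2 (Nat.pos_of_mem_properDivisors hd)
            rw [this]; ring
          rw [hsplit] at heq
          have hF := Fadd_sum f hn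
          have hcard : 3 ≤ n.divisors.card := card_ge_three hn h1 hp
          have hcast : ((n.divisors.card : ℂ) - 2) ≠ 0 := by
            rw [sub_ne_zero]
            intro h
            have : (n.divisors.card : ℂ) = ((2 : ℕ) : ℂ) := by exact_mod_cast h
            have := Nat.cast_injective this
            omega
          have : ((n.divisors.card : ℂ) - 2) * (f n - Fadd f n) = 0 := by
            linear_combination heq + hF
          rcases mul_eq_zero.mp this with h | h
          · exact absurd h hcast
          · exact sub_eq_zero.mp h
    intro m n hm hn
    rw [key _ (mul_pos hm hn), key m hm, key n hn, Fadd_mul f hm hn]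
  tfae_finish
end

section
/- The map η : ℂ[[X]] → 𝒜, from formal power series over ℂ to arithmetical functions, defined by η(Σ_{n≥0} a_n X^n)(m) = ω(m)!·a_{ω(m)} for m ∈ ℤ⁺, is an injective ring homomorphism from (ℂ[[X]], +, ·) into the unitary ring (𝒜, +, *_U); in particular η(F·G) = η(F) *_U η(G) for all formal power series F, G ∈ ℂ[[X]]. -/
open PowerSeries

/-- The unitary convolution of two arithmetical functions:
`(f *_U g)(n) = ∑_{d ∣ n, gcd(d, n/d) = 1} f(d) g(n/d)`. -/
noncomputable def unitaryConv (f g : ℕ → ℂ) : ℕ → ℂ :=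
  fun n => ∑ d ∈ n.divisors.filter (fun d => Nat.Coprime d (n / d)), f d * g (n / d)

/-- The map `η : ℂ[[X]] → 𝒜`, `η(∑ aₙ Xⁿ)(m) = ω(m)! · a_{ω(m)}`, where `ω(m)` is
the number of distinct prime factors of `m`. -/
noncomputable def eta (F : PowerSeries ℂ) : ℕ → ℂ :=
  fun m => (Nat.factorial m.primeFactors.card : ℂ) * PowerSeries.coeff m.primeFactors.card F

open Finset Nat in
/-- `S ↦ ∏_{p ∈ S} p^(v_p(m))`, the unitary divisor of `m` associated to a set of primes. -/
def phiAux (m : ℕ) (S : Finset ℕ) : ℕ := ∏ p ∈ S, p ^ m.factorization p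

open Finset Nat

lemma phiAux_ne_zero (m : ℕ) (S : Finset ℕ) (hS : S ⊆ m.primeFactors) : phiAux m S ≠ 0 := by
  refine Finset.prod_ne_zero_iff.2 fun p hp => ?_
  exact pow_ne_zero _ (Nat.pos_of_mem_primeFactors (hS hp)).ne'

lemma phiAux_primeFactors (m : ℕ) (S : Finset ℕ) (hS : S ⊆ m.primeFactors) :
    (phiAux m S).primeFactors = S := by
  classical
  induction S using Finset.induction_on with
  | empty => simp [phiAux]
  | @insert p S hp ih =>
    have hpm : p ∈ m.primeFactors := hS (Finset.mem_insert_self p S)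
    have hSm : S ⊆ m.primeFactors := fun q hq => hS (Finset.mem_insert_of_mem hq)
    have hppr : p.Prime := Nat.prime_of_mem_primeFactors hpm
    have he : m.factorization p ≠ 0 := by
      rwa [← Finsupp.mem_support_iff, Nat.support_factorization]
    rw [phiAux, Finset.prod_insert hp, ← phiAux]
    rw [Nat.primeFactors_mul (pow_ne_zero _ hppr.pos.ne') (phiAux_ne_zero m S hSm),
      Nat.primeFactors_pow _ he, hppr.primeFactors, ih hSm]
    rw [Finset.insert_eq]

lemma phiAux_primeFactors_self (m : ℕ) (hm : m ≠ 0) : phiAux m m.primeFactors = m := by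
  rw [phiAux, ← Nat.prod_factorization_eq_prod_primeFactors,
    Nat.factorization_prod_pow_eq_self hm]

lemma phiAux_mul_sdiff (m : ℕ) (hm : m ≠ 0) (S : Finset ℕ) (hS : S ⊆ m.primeFactors) :
    phiAux m S * phiAux m (m.primeFactors \ S) = m := by
  rw [phiAux, phiAux, ← Finset.prod_union (Finset.disjoint_sdiff),
    Finset.union_sdiff_of_subset hS]
  exact phiAux_primeFactors_self m hm

lemma phiAux_dvd (m : ℕ) (hm : m ≠ 0) (S : Finset ℕ) (hS : S ⊆ m.primeFactors) :
    phiAux m S ∣ m := ⟨_, (phiAux_mul_sdiff m hm S hS).symm⟩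

lemma div_phiAux (m : ℕ) (hm : m ≠ 0) (S : Finset ℕ) (hS : S ⊆ m.primeFactors) :
    m / phiAux m S = phiAux m (m.primeFactors \ S) := by
  exact Nat.div_eq_of_eq_mul_right (Nat.pos_of_ne_zero (phiAux_ne_zero m S hS))
    (phiAux_mul_sdiff m hm S hS).symm

lemma phiAux_coprime (m : ℕ) (hm : m ≠ 0) (S : Finset ℕ) (hS : S ⊆ m.primeFactors) :
    Nat.Coprime (phiAux m S) (m / phiAux m S) := by
  rw [div_phiAux m hm S hS]
  rw [← Nat.disjoint_primeFactors (phiAux_ne_zero m S hS)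
      (phiAux_ne_zero m _ (Finset.sdiff_subset)),
    phiAux_primeFactors m S hS, phiAux_primeFactors m _ (Finset.sdiff_subset)]
  exact Finset.disjoint_sdiff

lemma primeFactors_div_of_unitary (m d : ℕ) (hm : m ≠ 0) (hd : d ∣ m)
    (hco : Nat.Coprime d (m / d)) :
    (m / d).primeFactors = m.primeFactors \ d.primeFactors := by
  have hmd : d * (m / d) = m := Nat.mul_div_cancel' hd
  conv_rhs => rw [← hmd]
  rw [hco.primeFactors_mul, Finset.union_sdiff_cancel_left hco.disjoint_primeFactors]

lemma phiAux_of_unitary (m d : ℕ) (hm : m ≠ 0) (hd : d ∣ m)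
    (hco : Nat.Coprime d (m / d)) : phiAux m d.primeFactors = d := by
  have hd0 : d ≠ 0 := fun h => hm (by simpa [h] using hd)
  have hd'0 : m / d ≠ 0 := by
    have := Nat.div_pos (Nat.le_of_dvd (Nat.pos_of_ne_zero hm) hd) (Nat.pos_of_ne_zero hd0)
    omega
  have hmd : d * (m / d) = m := Nat.mul_div_cancel' hd
  have key : ∀ p ∈ d.primeFactors, m.factorization p = d.factorization p := by
    intro p hp
    have hpnot : p ∉ (m / d).primeFactors :=
      Finset.disjoint_left.1 hco.disjoint_primeFactors hp
    have h0 : (m / d).factorization p = 0 := by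
      rwa [← Nat.support_factorization, Finsupp.notMem_support_iff] at hpnot
    rw [← hmd, Nat.factorization_mul hd0 hd'0]
    simp [h0]
  calc phiAux m d.primeFactors = ∏ p ∈ d.primeFactors, p ^ d.factorization p :=
        Finset.prod_congr rfl fun p hp => by rw [key p hp]
    _ = d := phiAux_primeFactors_self d hd0

/-- `η` is an injective ring homomorphism from `(ℂ[[X]], +, ·)` into the unitary
ring `(𝒜, +, *_U)` of arithmetical functions: it is additive, sends the Cauchy
product to the unitary convolution, sends `1` to the identity of the unitary ring,
and is injective (as a map into functions on `ℤ⁺`). -/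
theorem stmt_4 :
    (∀ F G : PowerSeries ℂ, ∀ m : ℕ, 0 < m → eta (F + G) m = eta F m + eta G m) ∧
    (∀ F G : PowerSeries ℂ, ∀ m : ℕ, 0 < m → eta (F * G) m = unitaryConv (eta F) (eta G) m) ∧
    (∀ m : ℕ, 0 < m → eta 1 m = if m = 1 then 1 else 0) ∧
    (∀ F G : PowerSeries ℂ, (∀ m : ℕ, 0 < m → eta F m = eta G m) → F = G) := by
  classical
  refine ⟨fun F G m hm => by simp [eta, mul_add], ?_, ?_, ?_⟩
  · -- multiplicativity
    intro F G m hm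
    have hm0 : m ≠ 0 := hm.ne'
    set P := m.primeFactors with hP
    set k := P.card with hk
    -- transfer the unitary-divisor sum to a sum over subsets of the prime factors
    have step1 : unitaryConv (eta F) (eta G) m =
        ∑ S ∈ P.powerset, ((S.card.factorial : ℂ) * PowerSeries.coeff S.card F) *
          (((k - S.card).factorial : ℂ) * PowerSeries.coeff (k - S.card) G) := by
      rw [unitaryConv]
      refine Finset.sum_nbij' (fun d => d.primeFactors) (fun S => phiAux m S) ?_ ?_ ?_ ?_ ?_
      · intro d hd
        simp only [Finset.mem_filter, Nat.mem_divisors] at hd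
        exact Finset.mem_powerset.2 (Nat.primeFactors_mono hd.1.1 hm0)
      · intro S hS
        have hS' := Finset.mem_powerset.1 hS
        simp only [Finset.mem_filter, Nat.mem_divisors]
        exact ⟨⟨phiAux_dvd m hm0 S hS', hm0⟩, phiAux_coprime m hm0 S hS'⟩
      · intro d hd
        simp only [Finset.mem_filter, Nat.mem_divisors] at hd
        exact phiAux_of_unitary m d hm0 hd.1.1 hd.2
      · intro S hS
        exact phiAux_primeFactors m S (Finset.mem_powerset.1 hS)
      · intro d hd
        simp only [Finset.mem_filter, Nat.mem_divisors] at hd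
        have hsub : d.primeFactors ⊆ P := Nat.primeFactors_mono hd.1.1 hm0
        have hdivpf : (m / d).primeFactors = P \ d.primeFactors :=
          primeFactors_div_of_unitary m d hm0 hd.1.1 hd.2
        have hcard : (m / d).primeFactors.card = k - d.primeFactors.card := by
          rw [hdivpf, Finset.card_sdiff_of_subset hsub]
        rw [eta, eta, hcard]
    rw [show eta (F * G) m = (k.factorial : ℂ) * PowerSeries.coeff k (F * G) from rfl,
      PowerSeries.coeff_mul, Finset.Nat.sum_antidiagonal_eq_sum_range_succ_mk, Finset.mul_sum,
      step1, Finset.sum_powerset, ← hk]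
    refine Finset.sum_congr rfl fun j hj => ?_
    have hj' : j ≤ k := Nat.lt_succ_iff.1 (Finset.mem_range.1 hj)
    rw [Finset.sum_congr rfl (fun S hS => by
        rw [(Finset.mem_powersetCard.1 hS).2]),
      Finset.sum_const, Finset.card_powersetCard, ← hk, nsmul_eq_mul]
    have hcf : ((k.choose j : ℕ) : ℂ) * j.factorial * (k - j).factorial = k.factorial := by
      rw [← Nat.cast_mul, ← Nat.cast_mul, Nat.choose_mul_factorial_mul_factorial hj']
    rw [← hcf]
    ring
  · -- unit
    intro m hm
    by_cases h1 : m = 1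
    · simp [eta, h1]
    · have h2 : 1 < m := lt_of_le_of_ne hm (Ne.symm h1)
      have : m.primeFactors.Nonempty := Nat.nonempty_primeFactors.2 h2
      have hc : m.primeFactors.card ≠ 0 := by
        simpa [Finset.card_eq_zero] using this.ne_empty
      simp [eta, h1, PowerSeries.coeff_one, hc]
  · -- injectivity
    intro F G h
    ext k
    set T : Finset ℕ := (Finset.range k).image (Nat.nth Nat.Prime) with hT
    have hinj : Function.Injective (Nat.nth Nat.Prime) :=
      (Nat.nth_injective Nat.infinite_setOf_prime)
    have hTcard : T.card = k := by
      rw [hT, Finset.card_image_of_injective _ hinj, Finset.card_range]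
    set m : ℕ := ∏ p ∈ T, p with hmdef
    have hTprime : ∀ p ∈ T, p.Prime := by
      intro p hp
      rw [hT, Finset.mem_image] at hp
      obtain ⟨i, _, rfl⟩ := hp
      exact Nat.prime_nth_prime i
    have hpf : m.primeFactors = T := Nat.primeFactors_prod hTprime
    have hm0 : 0 < m := Finset.prod_pos fun p hp => (hTprime p hp).pos
    have := h m hm0
    rw [eta, eta, hpf, hTcard] at this
    have hfac : (k.factorial : ℂ) ≠ 0 := Nat.cast_ne_zero.2 k.factorial_ne_zero
    exact mul_left_cancel₀ hfac this
end

section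
/- (Theorem 1.3, Lambek–Carlitz characterization of exponential series.) Let F = Σ_{n≥0} a_n X^n ∈ ℂ[[X]] be a formal power series with a_1 ≠ 0. The following statements are equivalent: (1) F is an exponential series, i.e. a_n = a_1^n / n! for all n ≥ 0; (2) the arithmetical function η(F), defined by η(F)(m) = ω(m)!·a_{ω(m)}, is multiplicative; (3) F ⊙ (G·H) = (F ⊙ G)·(F ⊙ H) for all G, H ∈ ℂ[[X]]; (4) F ⊙ (G·G) = (F ⊙ G)·(F ⊙ G) for all G ∈ ℂ[[X]]; (5) Σ_{n≥0} 2^n a_n X^n = F·F. -/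
open PowerSeries

/-- The coefficientwise "multiplication" `⊙` of formal power series:
`(∑ aₙ Xⁿ) ⊙ (∑ bₙ Xⁿ) = ∑ n!·aₙ·bₙ Xⁿ`. -/
noncomputable def odot (F G : PowerSeries ℂ) : PowerSeries ℂ :=
  PowerSeries.mk fun n => (Nat.factorial n : ℂ) * PowerSeries.coeff n F * PowerSeries.coeff n G

/-- An arithmetical function is multiplicative if `f(1) = 1` and
`f(mn) = f(m)·f(n)` whenever `gcd(m,n) = 1`. -/
def IsMultArith (f : ℕ → ℂ) : Prop :=
  f 1 = 1 ∧ ∀ m n : ℕ, 0 < m → 0 < n → Nat.Coprime m n → f (m * n) = f m * f n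

private lemma P_ne_zero (k : ℕ) : (∏ i ∈ Finset.range k, Nat.nth Nat.Prime i) ≠ 0 :=
  Finset.prod_ne_zero_iff.mpr fun i _ => (Nat.prime_nth_prime i).pos.ne'

private lemma P_coprime (k : ℕ) :
    Nat.Coprime (∏ i ∈ Finset.range k, Nat.nth Nat.Prime i) (Nat.nth Nat.Prime k) :=
  Nat.Coprime.prod_left fun i hi =>
    (Nat.coprime_primes (Nat.prime_nth_prime i) (Nat.prime_nth_prime k)).mpr
      ((Nat.nth_strictMono Nat.infinite_setOf_prime).injective.ne
        (Finset.mem_range.mp hi).ne)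

private lemma P_primeFactors (k : ℕ) :
    (∏ i ∈ Finset.range k, Nat.nth Nat.Prime i).primeFactors.card = k := by
  induction k with
  | zero => simp
  | succ k ih =>
    rw [Finset.prod_range_succ, (P_coprime k).primeFactors_mul,
      Finset.card_union_of_disjoint (P_coprime k).disjoint_primeFactors,
      (Nat.prime_nth_prime k).primeFactors]
    simp [ih]

private lemma sum_choose_aux (m : ℕ) :
    ∑ i ∈ Finset.range (m + 1), ((m + 2).choose (i + 1) : ℂ) = 2 ^ (m + 2) - 2 := by
  have h := Nat.sum_range_choose (m + 2)
  rw [Finset.sum_range_succ, Finset.sum_range_succ'] at h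
  simp only [Nat.choose_self, Nat.choose_zero_right] at h
  have h2 : ∑ i ∈ Finset.range (m + 1), (m + 2).choose (i + 1) = 2 ^ (m + 2) - 2 := by omega
  have hle : 2 ≤ 2 ^ (m + 2) := by
    calc 2 ≤ 2 ^ 2 := by norm_num
    _ ≤ 2 ^ (m + 2) := Nat.pow_le_pow_right (by norm_num) (by omega)
  rw [← Nat.cast_sum, h2, Nat.cast_sub hle, Nat.cast_pow]
  norm_num

/-- Theorem 1.3: Lambek–Carlitz characterization of exponential series. -/
theorem stmt_5 (F : PowerSeries ℂ) (h1 : PowerSeries.coeff 1 F ≠ 0) :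
    [(∀ n : ℕ, PowerSeries.coeff n F = (PowerSeries.coeff 1 F) ^ n / (Nat.factorial n : ℂ)),
     IsMultArith (eta F),
     (∀ G H : PowerSeries ℂ, odot F (G * H) = odot F G * odot F H),
     (∀ G : PowerSeries ℂ, odot F (G * G) = odot F G * odot F G),
     (PowerSeries.mk fun n => (2 : ℂ) ^ n * PowerSeries.coeff n F) = F * F].TFAE := by
  have fact_ne : ∀ k : ℕ, ((Nat.factorial k : ℂ)) ≠ 0 :=
    fun k => Nat.cast_ne_zero.mpr k.factorial_ne_zero
  tfae_have 1 → 3 := by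
    intro h G H
    have key : ∀ k : ℕ, (k.factorial : ℂ) * PowerSeries.coeff k F =
        (PowerSeries.coeff 1 F) ^ k := by
      intro k; rw [h k, mul_div_assoc']; exact mul_div_cancel_left₀ _ (fact_ne k)
    ext n
    simp only [odot, coeff_mk, coeff_mul, Finset.mul_sum]
    refine Finset.sum_congr rfl fun p hp => ?_
    have hps : p.1 + p.2 = n := Finset.HasAntidiagonal.mem_antidiagonal.mp hp
    have e : (n.factorial : ℂ) * PowerSeries.coeff n F =
        ((p.1.factorial : ℂ) * PowerSeries.coeff p.1 F) *
          ((p.2.factorial : ℂ) * PowerSeries.coeff p.2 F) := by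
      rw [key n, key p.1, key p.2, ← pow_add, hps]
    linear_combination (PowerSeries.coeff p.1 G * PowerSeries.coeff p.2 H) * e
  tfae_have 3 → 4 := fun h G => h G G
  tfae_have 4 → 5 := by
    intro h
    set E : PowerSeries ℂ := PowerSeries.mk fun n => 1 / (n.factorial : ℂ) with hEdef
    have hE : ∀ n : ℕ, PowerSeries.coeff n (E * E) = 2 ^ n / (n.factorial : ℂ) := by
      intro n
      rw [coeff_mul, Finset.Nat.sum_antidiagonal_eq_sum_range_succ_mk]
      simp only [hEdef, coeff_mk]
      have step : ∀ k ∈ Finset.range (n + 1),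
          (1 / (k.factorial : ℂ)) * (1 / ((n - k).factorial : ℂ)) =
            (n.choose k : ℂ) / (n.factorial : ℂ) := by
        intro k hk
        rw [Nat.cast_choose ℂ (Nat.lt_succ_iff.mp (Finset.mem_range.mp hk)),
          one_div_mul_one_div, eq_div_iff (fact_ne n), one_div, inv_mul_eq_div]
      rw [Finset.sum_congr rfl step, ← Finset.sum_div, ← Nat.cast_sum,
        Nat.sum_range_choose, Nat.cast_pow]
      norm_num
    have hFE : odot F E = F := by
      ext n
      simp only [odot, hEdef, coeff_mk]
      rw [mul_one_div, mul_div_cancel_left₀ _ (fact_ne n)]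
    have hFEE : odot F (E * E) =
        (PowerSeries.mk fun n => (2 : ℂ) ^ n * PowerSeries.coeff n F) := by
      ext n
      simp only [odot, coeff_mk, hE n]
      rw [show (n.factorial : ℂ) * PowerSeries.coeff n F * ((2 : ℂ) ^ n / (n.factorial : ℂ)) =
        ((n.factorial : ℂ) / (n.factorial : ℂ)) * ((2 : ℂ) ^ n * PowerSeries.coeff n F) from by
          ring, div_self (fact_ne n), one_mul]
    have := h E
    rw [hFE, hFEE] at this
    exact this
  tfae_have 5 → 1 := by
    intro h5
    have key : ∀ n : ℕ, (2 : ℂ) ^ n * PowerSeries.coeff n F =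
        ∑ k ∈ Finset.range (n + 1),
          PowerSeries.coeff k F * PowerSeries.coeff (n - k) F := by
      intro n
      have := congrArg (PowerSeries.coeff n) h5
      rwa [coeff_mk, coeff_mul, Finset.Nat.sum_antidiagonal_eq_sum_range_succ_mk] at this
    have h0 : PowerSeries.coeff 0 F = 1 := by
      have k1 := key 1
      rw [Finset.sum_range_succ, Finset.sum_range_succ, Finset.sum_range_zero] at k1
      simp only [Nat.sub_zero, Nat.sub_self, pow_one, zero_add] at k1
      have hfac : (PowerSeries.coeff 0 F - 1) * (2 * PowerSeries.coeff 1 F) = 0 := by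
        linear_combination -k1
      rcases mul_eq_zero.mp hfac with h | h
      · exact sub_eq_zero.mp h
      · rcases mul_eq_zero.mp h with h' | h'
        · exact absurd h' two_ne_zero
        · exact absurd h' h1
    intro n
    induction n using Nat.strong_induction_on with
    | _ n ih =>
      match n with
      | 0 => simpa using h0
      | 1 => simp
      | (m + 2) =>
        set a1 := PowerSeries.coeff 1 F with ha1
        have hn2 := key (m + 2)
        rw [Finset.sum_range_succ, Finset.sum_range_succ'] at hn2
        simp only [Nat.sub_zero, Nat.sub_self] at hn2
        have hmid : ∀ i ∈ Finset.range (m + 1),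
            PowerSeries.coeff (i + 1) F * PowerSeries.coeff (m + 2 - (i + 1)) F =
              a1 ^ (m + 2) * ((m + 2).choose (i + 1) : ℂ) / ((m + 2).factorial : ℂ) := by
          intro i hi
          have hi' : i < m + 1 := Finset.mem_range.mp hi
          have hsub : m + 2 - (i + 1) = m + 1 - i := by omega
          have hpow : a1 ^ (i + 1) * a1 ^ (m + 1 - i) = a1 ^ (m + 2) := by
            rw [← pow_add]; congr 1; omega
          rw [hsub, ih (i + 1) (by omega), ih (m + 1 - i) (by omega),
            Nat.cast_choose ℂ (by omega), hsub, ← hpow, div_mul_div_comm]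
          conv_rhs => rw [mul_div_assoc, div_div,
            mul_comm (((i + 1).factorial : ℂ) * ((m + 1 - i).factorial : ℂ))
              (((m + 2).factorial : ℂ)),
            ← div_div, div_self (fact_ne (m + 2)), mul_one_div]
        have hsum : ∑ i ∈ Finset.range (m + 1),
            PowerSeries.coeff (i + 1) F * PowerSeries.coeff (m + 2 - (i + 1)) F =
              a1 ^ (m + 2) * ((2 : ℂ) ^ (m + 2) - 2) / ((m + 2).factorial : ℂ) := by
          rw [Finset.sum_congr rfl hmid, ← Finset.sum_div, ← Finset.mul_sum, sum_choose_aux]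
        have h2ne : (2 : ℂ) ^ (m + 2) - 2 ≠ 0 := by
          refine sub_ne_zero.mpr ?_
          have h4 : 2 < 2 ^ (m + 2) := by
            calc 2 < 2 ^ 2 := by norm_num
            _ ≤ 2 ^ (m + 2) := Nat.pow_le_pow_right (by norm_num) (by omega)
          exact_mod_cast h4.ne'
        have hfinal : ((2 : ℂ) ^ (m + 2) - 2) *
            (PowerSeries.coeff (m + 2) F - a1 ^ (m + 2) / ((m + 2).factorial : ℂ)) = 0 := by
          linear_combination hn2 + hsum + 2 * PowerSeries.coeff (m + 2) F * h0
        rcases mul_eq_zero.mp hfinal with h | h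
        · exact absurd h h2ne
        · exact sub_eq_zero.mp h
  tfae_have 1 → 2 := by
    intro h
    have key : ∀ k : ℕ, (k.factorial : ℂ) * PowerSeries.coeff k F =
        (PowerSeries.coeff 1 F) ^ k := by
      intro k; rw [h k, mul_div_assoc']; exact mul_div_cancel_left₀ _ (fact_ne k)
    have e : ∀ x : ℕ, eta F x = (PowerSeries.coeff 1 F) ^ (x.primeFactors.card) :=
      fun x => key _
    constructor
    · rw [e 1, Nat.primeFactors_one]; simp
    · intro m n _ _ hco
      rw [e, e, e, hco.primeFactors_mul,
        Finset.card_union_of_disjoint hco.disjoint_primeFactors, pow_add]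
  tfae_have 2 → 1 := by
    intro h2
    have h0 : PowerSeries.coeff 0 F = 1 := by
      have := h2.1
      simpa [eta, Nat.primeFactors_one] using this
    have key : ∀ k : ℕ, (k.factorial : ℂ) * PowerSeries.coeff k F =
        (PowerSeries.coeff 1 F) ^ k := by
      intro k
      induction k with
      | zero => simpa using h0
      | succ k ih =>
        have hco := P_coprime k
        have hmul := h2.2 _ _ (Nat.pos_of_ne_zero (P_ne_zero k))
          (Nat.prime_nth_prime k).pos hco
        have cP : (∏ i ∈ Finset.range k, Nat.nth Nat.Prime i).primeFactors.card = k :=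
          P_primeFactors k
        have cq : (Nat.nth Nat.Prime k).primeFactors.card = 1 := by
          rw [(Nat.prime_nth_prime k).primeFactors]; simp
        have cPq : ((∏ i ∈ Finset.range k, Nat.nth Nat.Prime i) *
            Nat.nth Nat.Prime k).primeFactors.card = k + 1 := by
          rw [hco.primeFactors_mul,
            Finset.card_union_of_disjoint hco.disjoint_primeFactors, cP, cq]
        unfold eta at hmul
        rw [cP, cq, cPq] at hmul
        rw [hmul, ih]
        simp [pow_succ, Nat.factorial_one]
    intro n
    have hk := key n
    rw [eq_div_iff (fact_ne n)]
    linear_combination hk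
  tfae_finish
end

section
/- (Theorem 1.4, additive version of Theorem 1.3.) Let F = Σ_{n≥0} a_n X^n ∈ ℂ[[X]] be a formal power series with a_1 ≠ 0. The following statements are equivalent: (1) a_0 = 0 and a_n = a_1/(n−1)! for all n ∈ ℤ⁺; (2) the arithmetical function η(F), defined by η(F)(m) = ω(m)!·a_{ω(m)}, is additive; (3) F ⊙ (G·H) = (F ⊙ G)·H + (F ⊙ H)·G for all G, H ∈ ℂ[[X]]; (4) F ⊙ (G·G) = 2·(F ⊙ G)·G for all G ∈ ℂ[[X]]; (5) Σ_{n≥0} 2^n a_n X^n = (Σ_{n≥0} (2/n!) X^n) · F. -/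
open PowerSeries

/-- An arithmetical function is additive if `f(mn) = f(m) + f(n)` whenever
`gcd(m,n) = 1`. -/
def IsAddArith (f : ℕ → ℂ) : Prop :=
  ∀ m n : ℕ, 0 < m → 0 < n → Nat.Coprime m n → f (m * n) = f m + f n

/-- Under condition (1), `n! aₙ = a₁ n` for all `n`. -/
lemma aux_fact_coeff (F : PowerSeries ℂ)
    (h : PowerSeries.coeff 0 F = 0 ∧ ∀ n : ℕ, 0 < n →
      PowerSeries.coeff n F = PowerSeries.coeff 1 F / (Nat.factorial (n - 1) : ℂ)) :
    ∀ n : ℕ, (Nat.factorial n : ℂ) * PowerSeries.coeff n F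
      = PowerSeries.coeff 1 F * n := by
  intro n
  match n with
  | 0 => simp [h.1]
  | k + 1 =>
    rw [h.2 (k+1) (Nat.succ_pos k)]
    have hk : ((Nat.factorial k : ℂ)) ≠ 0 := Nat.cast_ne_zero.mpr (Nat.factorial_ne_zero k)
    simp only [Nat.add_sub_cancel]
    rw [Nat.factorial_succ]
    push_cast
    field_simp

/-- For every `k` there is a positive integer with exactly `k` distinct prime
factors. -/
lemma aux_exists_omega : ∀ k : ℕ, ∃ m : ℕ, 0 < m ∧ m.primeFactors.card = k := by
  intro k
  induction k with
  | zero => exact ⟨1, one_pos, by simp⟩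
  | succ k ih =>
    obtain ⟨m, hm, hcard⟩ := ih
    obtain ⟨p, hpm, hp⟩ := Nat.exists_infinite_primes (m + 1)
    have hnd : ¬ p ∣ m := fun hd => absurd (Nat.le_of_dvd hm hd) (by omega)
    have hcop : Nat.Coprime m p := Nat.coprime_comm.mp ((Nat.Prime.coprime_iff_not_dvd hp).mpr hnd)
    refine ⟨m * p, Nat.mul_pos hm hp.pos, ?_⟩
    rw [hcop.primeFactors_mul, Finset.card_union_of_disjoint hcop.disjoint_primeFactors,
      hp.primeFactors]
    simp [hcard]

/-- Theorem 1.4: additive version of the Lambek–Carlitz characterization of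
exponential series. -/
theorem stmt_6 (F : PowerSeries ℂ) (h1 : PowerSeries.coeff 1 F ≠ 0) :
    [(PowerSeries.coeff 0 F = 0 ∧ ∀ n : ℕ, 0 < n →
        PowerSeries.coeff n F = PowerSeries.coeff 1 F / (Nat.factorial (n - 1) : ℂ)),
     IsAddArith (eta F),
     (∀ G H : PowerSeries ℂ, odot F (G * H) = odot F G * H + odot F H * G),
     (∀ G : PowerSeries ℂ, odot F (G * G) = 2 * odot F G * G),
     (PowerSeries.mk fun n => (2 : ℂ) ^ n * PowerSeries.coeff n F)
        = (PowerSeries.mk fun n => (2 : ℂ) / (Nat.factorial n : ℂ)) * F].TFAE := by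
  tfae_have 1 → 3 := by
    intro h G H
    have e := aux_fact_coeff F h
    ext n
    simp only [odot, coeff_mk, map_add, coeff_mul]
    rw [show (∑ p ∈ Finset.HasAntidiagonal.antidiagonal n,
          (Nat.factorial p.1 : ℂ) * PowerSeries.coeff p.1 F * PowerSeries.coeff p.1 H
            * PowerSeries.coeff p.2 G)
        = ∑ p ∈ Finset.HasAntidiagonal.antidiagonal n,
          (Nat.factorial p.2 : ℂ) * PowerSeries.coeff p.2 F * PowerSeries.coeff p.2 H
            * PowerSeries.coeff p.1 G from
      (Finset.Nat.sum_antidiagonal_swap (f := fun p =>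
        (Nat.factorial p.1 : ℂ) * PowerSeries.coeff p.1 F * PowerSeries.coeff p.1 H
          * PowerSeries.coeff p.2 G)).symm]
    rw [Finset.mul_sum]
    refine Eq.trans (Finset.sum_congr rfl fun p hp => ?_) Finset.sum_add_distrib
    have hpn : p.1 + p.2 = n := Finset.HasAntidiagonal.mem_antidiagonal.mp hp
    rw [e n, e p.1, e p.2, ← hpn]
    push_cast
    ring
  tfae_have 3 → 4 := by
    intro h G
    rw [h G G]; ring
  tfae_have 4 → 5 := by
    intro h
    set E : PowerSeries ℂ := PowerSeries.mk fun n => ((Nat.factorial n : ℂ))⁻¹ with hE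
    have hEc : ∀ n : ℕ, PowerSeries.coeff n E = ((Nat.factorial n : ℂ))⁻¹ := by
      intro n; rw [hE, coeff_mk]
    have hEE : ∀ n : ℕ, PowerSeries.coeff n (E * E) = 2 ^ n / (Nat.factorial n : ℂ) := by
      intro n
      rw [coeff_mul, Finset.Nat.sum_antidiagonal_eq_sum_range_succ_mk]
      have : ∀ k ∈ Finset.range (n + 1),
          PowerSeries.coeff ((k, n - k).1) E * PowerSeries.coeff ((k, n - k).2) E
            = (n.choose k : ℂ) / (Nat.factorial n : ℂ) := by
        intro k hk
        have hkn : k ≤ n := Nat.lt_succ_iff.mp (Finset.mem_range.mp hk)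
        rw [hEc, hEc, Nat.cast_choose ℂ hkn]
        have h2 : ((Nat.factorial k : ℂ)) ≠ 0 := Nat.cast_ne_zero.mpr (Nat.factorial_ne_zero k)
        have h3 : ((Nat.factorial (n - k) : ℂ)) ≠ 0 :=
          Nat.cast_ne_zero.mpr (Nat.factorial_ne_zero (n - k))
        have h4 : ((Nat.factorial n : ℂ)) ≠ 0 := Nat.cast_ne_zero.mpr (Nat.factorial_ne_zero n)
        field_simp
      rw [Finset.sum_congr rfl this, ← Finset.sum_div, ← Nat.cast_sum, Nat.sum_range_choose]
      push_cast
      ring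
    have hFE : odot F E = F := by
      ext n
      simp only [odot, coeff_mk, hEc]
      have h4 : ((Nat.factorial n : ℂ)) ≠ 0 := Nat.cast_ne_zero.mpr (Nat.factorial_ne_zero n)
      field_simp
    have hC2 : ((2 : PowerSeries ℂ)) = PowerSeries.C 2 := (map_ofNat PowerSeries.C 2).symm
    have h2E : (PowerSeries.mk fun n => (2 : ℂ) / (Nat.factorial n : ℂ)) = 2 * E := by
      ext n
      rw [hC2, coeff_C_mul, hEc, coeff_mk]
      ring
    have key := h E
    rw [hFE] at key
    have lhs_eq : (PowerSeries.mk fun n => (2 : ℂ) ^ n * PowerSeries.coeff n F)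
        = odot F (E * E) := by
      ext n
      simp only [odot, coeff_mk, hEE n]
      have h4 : ((Nat.factorial n : ℂ)) ≠ 0 := Nat.cast_ne_zero.mpr (Nat.factorial_ne_zero n)
      field_simp
    rw [lhs_eq, key, h2E]
    ring
  tfae_have 5 → 1 := by
    intro h
    have key : ∀ n : ℕ, (2 : ℂ) ^ n * PowerSeries.coeff n F
        = ∑ k ∈ Finset.range (n + 1),
            2 / (Nat.factorial k : ℂ) * PowerSeries.coeff (n - k) F := by
      intro n
      have hc := congrArg (PowerSeries.coeff n) h
      rw [coeff_mk, coeff_mul, Finset.Nat.sum_antidiagonal_eq_sum_range_succ_mk] at hc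
      simpa only [coeff_mk] using hc
    have h0 : PowerSeries.coeff 0 F = 0 := by
      have h00 := key 0
      rw [Finset.sum_range_one] at h00
      simp only [pow_zero, one_mul, Nat.sub_zero, Nat.factorial_zero, Nat.cast_one,
        div_one] at h00
      linear_combination -h00
    refine ⟨h0, ?_⟩
    intro n hn
    induction n using Nat.strong_induction_on with
    | _ n ih =>
      match n, hn with
      | 1, _ => simp
      | (m + 2), _ =>
        have hkey := key (m + 2)
        rw [Finset.sum_range_succ' _ (m + 2), Finset.sum_range_succ] at hkey
        simp only [Nat.sub_self, h0, mul_zero, add_zero, Nat.sub_zero,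
          Nat.factorial_zero, Nat.cast_one, div_one] at hkey
        have hsum : ∀ i ∈ Finset.range (m + 1),
            2 / (Nat.factorial (i + 1) : ℂ) * PowerSeries.coeff (m + 2 - (i + 1)) F
              = PowerSeries.coeff 1 F *
                  (2 / ((Nat.factorial (i + 1) : ℂ) * (Nat.factorial (m - i) : ℂ))) := by
          intro i hi
          have him : i < m + 1 := Finset.mem_range.mp hi
          have hA : m + 2 - (i + 1) = m + 1 - i := by omega
          have hB : 0 < m + 1 - i := by omega
          have hC : m + 1 - i < m + 2 := by omega
          rw [hA, ih (m + 1 - i) hC hB]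
          have hD : m + 1 - i - 1 = m - i := by omega
          rw [hD]
          have h5 : ((Nat.factorial (i + 1) : ℂ)) ≠ 0 :=
            Nat.cast_ne_zero.mpr (Nat.factorial_ne_zero _)
          have h6 : ((Nat.factorial (m - i) : ℂ)) ≠ 0 :=
            Nat.cast_ne_zero.mpr (Nat.factorial_ne_zero _)
          field_simp
        rw [Finset.sum_congr rfl hsum, ← Finset.mul_sum] at hkey
        have hS : (∑ i ∈ Finset.range (m + 1),
            2 / ((Nat.factorial (i + 1) : ℂ) * (Nat.factorial (m - i) : ℂ)))
            = (2 ^ (m + 2) - 2) / (Nat.factorial (m + 1) : ℂ) := by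
          have hterm : ∀ i ∈ Finset.range (m + 1),
              2 / ((Nat.factorial (i + 1) : ℂ) * (Nat.factorial (m - i) : ℂ))
                = 2 * ((m + 1).choose (i + 1) : ℂ) / (Nat.factorial (m + 1) : ℂ) := by
            intro i hi
            have him : i < m + 1 := Finset.mem_range.mp hi
            have hle : i + 1 ≤ m + 1 := him
            rw [Nat.cast_choose ℂ hle]
            have hD : m + 1 - (i + 1) = m - i := by omega
            rw [hD]
            have h5 : ((Nat.factorial (i + 1) : ℂ)) ≠ 0 :=
              Nat.cast_ne_zero.mpr (Nat.factorial_ne_zero _)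
            have h6 : ((Nat.factorial (m - i) : ℂ)) ≠ 0 :=
              Nat.cast_ne_zero.mpr (Nat.factorial_ne_zero _)
            have h7 : ((Nat.factorial (m + 1) : ℂ)) ≠ 0 :=
              Nat.cast_ne_zero.mpr (Nat.factorial_ne_zero _)
            field_simp
          rw [Finset.sum_congr rfl hterm]
          have hchoose : (∑ i ∈ Finset.range (m + 1), ((m + 1).choose (i + 1) : ℂ))
              = 2 ^ (m + 1) - 1 := by
            have hnat := Nat.sum_range_choose (m + 1)
            have h8 : (∑ i ∈ Finset.range (m + 2), ((m + 1).choose i : ℂ)) = 2 ^ (m + 1) := by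
              exact_mod_cast congrArg (Nat.cast : ℕ → ℂ) hnat
            rw [Finset.sum_range_succ' _ (m + 1)] at h8
            simp only [Nat.choose_zero_right, Nat.cast_one] at h8
            linear_combination h8
          rw [show (∑ i ∈ Finset.range (m + 1),
              2 * (((m + 1).choose (i + 1) : ℂ)) / (Nat.factorial (m + 1) : ℂ))
            = (2 / (Nat.factorial (m + 1) : ℂ))
                * ∑ i ∈ Finset.range (m + 1), (((m + 1).choose (i + 1)) : ℂ) by
              rw [Finset.mul_sum]; exact Finset.sum_congr rfl fun i _ => by ring]
          rw [hchoose]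
          ring
        rw [hS] at hkey
        have hne : (2 : ℂ) ^ (m + 2) - 2 ≠ 0 := by
          have hlt : (2 : ℕ) < 2 ^ (m + 2) := by
            calc (2:ℕ) < 4 := by norm_num
            _ = 2 ^ 2 := by norm_num
            _ ≤ 2 ^ (m + 2) := Nat.pow_le_pow_right (by norm_num) (by omega)
          have h9 : ((2 : ℕ) : ℂ) ≠ ((2 ^ (m + 2) : ℕ) : ℂ) :=
            fun hc => absurd (Nat.cast_injective hc) (by omega)
          push_cast at h9
          intro hc
          exact h9 (by linear_combination -hc)
        have h7 : ((Nat.factorial (m + 1) : ℂ)) ≠ 0 :=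
          Nat.cast_ne_zero.mpr (Nat.factorial_ne_zero _)
        have hfin : ((2:ℂ) ^ (m + 2) - 2) * PowerSeries.coeff (m + 2) F
            = ((2:ℂ) ^ (m + 2) - 2)
                * (PowerSeries.coeff 1 F / (Nat.factorial (m + 1) : ℂ)) := by
          linear_combination hkey
        have := mul_left_cancel₀ hne hfin
        simpa using this
  tfae_have 1 → 2 := by
    intro h
    have e := aux_fact_coeff F h
    intro m n hm hn hcop
    unfold eta
    rw [e, e, e, hcop.primeFactors_mul,
      Finset.card_union_of_disjoint hcop.disjoint_primeFactors]
    push_cast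
    ring
  tfae_have 2 → 1 := by
    intro h
    have h0 : PowerSeries.coeff 0 F = 0 := by
      have := h 1 1 one_pos one_pos (Nat.coprime_one_left 1)
      simp only [eta, mul_one, Nat.primeFactors_one, Finset.card_empty,
        Nat.factorial_zero, Nat.cast_one, one_mul] at this
      linear_combination -this
    refine ⟨h0, ?_⟩
    have main : ∀ k : ℕ, 0 < k →
        PowerSeries.coeff k F = PowerSeries.coeff 1 F / (Nat.factorial (k - 1) : ℂ) := by
      intro k hk
      induction k with
      | zero => omega
      | succ k ih =>
        match k, ih with
        | 0, _ => simp
        | (j + 1), ih =>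
          have ihv := ih (Nat.succ_pos j)
          simp only [Nat.add_sub_cancel] at ihv
          obtain ⟨m, hm, hcard⟩ := aux_exists_omega (j + 1)
          obtain ⟨p, hpm, hp⟩ := Nat.exists_infinite_primes (m + 1)
          have hnd : ¬ p ∣ m := fun hd => absurd (Nat.le_of_dvd hm hd) (by omega)
          have hcop : Nat.Coprime m p :=
            Nat.coprime_comm.mp ((Nat.Prime.coprime_iff_not_dvd hp).mpr hnd)
          have hmp : (m * p).primeFactors.card = j + 2 := by
            rw [hcop.primeFactors_mul,
              Finset.card_union_of_disjoint hcop.disjoint_primeFactors, hp.primeFactors]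
            simp [hcard]
          have hadd := h m p hm hp.pos hcop
          unfold eta at hadd
          rw [hmp, hcard, hp.primeFactors] at hadd
          simp only [Finset.card_singleton, Nat.factorial_one, Nat.cast_one, one_mul] at hadd
          rw [ihv] at hadd
          have h5 : ((Nat.factorial j : ℂ)) ≠ 0 := Nat.cast_ne_zero.mpr (Nat.factorial_ne_zero _)
          have h6 : ((Nat.factorial (j + 1) : ℂ)) ≠ 0 :=
            Nat.cast_ne_zero.mpr (Nat.factorial_ne_zero _)
          have hfact2 : (Nat.factorial (j + 2) : ℂ) = ((j:ℂ) + 2) * (Nat.factorial (j + 1) : ℂ) := by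
            rw [Nat.factorial_succ]; push_cast; ring
          have hfact1 : (Nat.factorial (j + 1) : ℂ) = ((j:ℂ) + 1) * (Nat.factorial j : ℂ) := by
            rw [Nat.factorial_succ]; push_cast; ring
          have h8 : ((Nat.factorial (j + 2) : ℂ)) * PowerSeries.coeff (j + 2) F
              = ((j:ℂ) + 2) * PowerSeries.coeff 1 F := by
            rw [hadd, hfact1]
            field_simp
            ring
          rw [hfact2] at h8
          have hj2 : ((j:ℂ) + 2) ≠ 0 := by
            have : (((j + 2 : ℕ)) : ℂ) ≠ 0 := Nat.cast_ne_zero.mpr (by omega)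
            push_cast at this
            convert this using 2
          have h9 : PowerSeries.coeff (j + 2) F * (Nat.factorial (j + 1) : ℂ)
              = PowerSeries.coeff 1 F :=
            mul_left_cancel₀ hj2 (by linear_combination h8)
          show PowerSeries.coeff (j + 2) F
              = PowerSeries.coeff 1 F / (Nat.factorial (j + 2 - 1) : ℂ)
          rw [show j + 2 - 1 = j + 1 from rfl, eq_div_iff h6]
          exact h9
    exact fun n hn => main n hn
  tfae_finish
end

section
/- (Equivalence (1) ⟺ (2) of Theorem 1.3.) Let F = Σ_{n≥0} a_n X^n ∈ ℂ[[X]] with a_1 ≠ 0. Then the arithmetical function η(F) : m ↦ ω(m)!·a_{ω(m)} is multiplicative if and only if a_n = a_1^n / n! for all n ≥ 0. -/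
open PowerSeries

lemma exists_coprime_omega (j k : ℕ) :
    ∃ m n : ℕ, 0 < m ∧ 0 < n ∧ Nat.Coprime m n ∧
      m.primeFactors.card = j ∧ n.primeFactors.card = k := by
  have hinj : Function.Injective (Nat.nth Nat.Prime) :=
    Nat.nth_injective Nat.infinite_setOf_prime
  set s := (Finset.range j).image (Nat.nth Nat.Prime) with hs
  set t := ((Finset.Ico j (j + k)).image (Nat.nth Nat.Prime)) with ht
  have hsp : ∀ p ∈ s, p.Prime := by
    intro p hp
    simp only [hs, Finset.mem_image] at hp
    obtain ⟨i, _, rfl⟩ := hp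
    exact Nat.prime_nth_prime i
  have htp : ∀ p ∈ t, p.Prime := by
    intro p hp
    simp only [ht, Finset.mem_image] at hp
    obtain ⟨i, _, rfl⟩ := hp
    exact Nat.prime_nth_prime i
  refine ⟨∏ p ∈ s, p, ∏ p ∈ t, p, ?_, ?_, ?_, ?_, ?_⟩
  · exact Finset.prod_pos fun p hp => (hsp p hp).pos
  · exact Finset.prod_pos fun p hp => (htp p hp).pos
  · have hm : (∏ p ∈ s, p) ≠ 0 := (Finset.prod_pos fun p hp => (hsp p hp).pos).ne'
    have hn : (∏ p ∈ t, p) ≠ 0 := (Finset.prod_pos fun p hp => (htp p hp).pos).ne'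
    rw [← Nat.disjoint_primeFactors hm hn, Nat.primeFactors_prod hsp,
      Nat.primeFactors_prod htp, hs, ht, Finset.disjoint_image hinj]
    have : Finset.range j = Finset.Ico 0 j := by simp
    rw [this]
    exact Finset.Ico_disjoint_Ico_consecutive 0 j (j + k)
  · rw [Nat.primeFactors_prod hsp, hs, Finset.card_image_of_injective _ hinj,
      Finset.card_range]
  · rw [Nat.primeFactors_prod htp, ht, Finset.card_image_of_injective _ hinj,
      Nat.card_Ico]
    omega

/-- Equivalence (1) ⟺ (2) of Theorem 1.3: `η(F)` is multiplicative iff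
`aₙ = a₁ⁿ/n!` for all `n`. -/
theorem stmt_7 (F : PowerSeries ℂ) (h1 : PowerSeries.coeff 1 F ≠ 0) :
    IsMultArith (eta F) ↔
      ∀ n : ℕ, PowerSeries.coeff n F
        = (PowerSeries.coeff 1 F) ^ n / (Nat.factorial n : ℂ) := by
  constructor
  · rintro ⟨h0, hmul⟩
    have key : ∀ j k : ℕ, ((j + k).factorial : ℂ) * PowerSeries.coeff (j + k) F
        = ((j.factorial : ℂ) * PowerSeries.coeff j F)
          * ((k.factorial : ℂ) * PowerSeries.coeff k F) := by
      intro j k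
      obtain ⟨m, n, hm, hn, hco, hj, hk⟩ := exists_coprime_omega j k
      have hcard : (m * n).primeFactors.card = j + k := by
        rw [hco.primeFactors_mul, Finset.card_union_of_disjoint hco.disjoint_primeFactors,
          hj, hk]
      have := hmul m n hm hn hco
      simpa [eta, hcard, hj, hk] using this
    have ha0 : PowerSeries.coeff 0 F = 1 := by
      have : (1 : ℕ).primeFactors.card = 0 := by simp
      simpa [eta, this] using h0
    intro n
    induction n with
    | zero => simpa using ha0
    | succ n ih =>
      have h := key n 1
      rw [ih] at h
      have hfac : ((n.factorial : ℂ)) ≠ 0 := Nat.cast_ne_zero.mpr n.factorial_ne_zero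
      have hfac2 : (((n+1).factorial : ℂ)) ≠ 0 := Nat.cast_ne_zero.mpr (n+1).factorial_ne_zero
      field_simp at h ⊢
      linear_combination h
  · intro h
    have hval : ∀ m : ℕ, eta F m = (PowerSeries.coeff 1 F) ^ m.primeFactors.card := by
      intro m
      have hfac : ((m.primeFactors.card.factorial : ℂ)) ≠ 0 :=
        Nat.cast_ne_zero.mpr (Nat.factorial_ne_zero _)
      rw [eta, h m.primeFactors.card]
      field_simp
    refine ⟨by simp [hval], fun m n hm hn hco => ?_⟩
    have hcard : (m * n).primeFactors.card = m.primeFactors.card + n.primeFactors.card := by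
      rw [hco.primeFactors_mul, Finset.card_union_of_disjoint hco.disjoint_primeFactors]
    rw [hval, hval, hval, hcard, pow_add]
end

section
/- (Equivalence (1) ⟺ (2) of Theorem 1.4.) Let F = Σ_{n≥0} a_n X^n ∈ ℂ[[X]] with a_1 ≠ 0. Then the arithmetical function η(F) : m ↦ ω(m)!·a_{ω(m)} is additive if and only if a_0 = 0 and a_n = a_1/(n−1)! for all n ∈ ℤ⁺. -/
open PowerSeries Finset

private noncomputable def sqf (s : Finset ℕ) : ℕ := ∏ i ∈ s, Nat.nth Nat.Prime i

private lemma sqf_primeFactors (s : Finset ℕ) :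
    (sqf s).primeFactors = s.image (Nat.nth Nat.Prime) := by
  have h : ∏ p ∈ s.image (Nat.nth Nat.Prime), p = sqf s :=
    Finset.prod_image (fun a _ b _ h => Nat.nth_injective Nat.infinite_setOf_prime h)
  rw [← h]
  exact Nat.primeFactors_prod (fun p hp => by
    obtain ⟨i, _, rfl⟩ := Finset.mem_image.1 hp
    exact Nat.prime_nth_prime i)

private lemma sqf_card (s : Finset ℕ) : (sqf s).primeFactors.card = s.card := by
  rw [sqf_primeFactors, Finset.card_image_of_injective _
    (Nat.nth_injective Nat.infinite_setOf_prime)]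

private lemma sqf_pos (s : Finset ℕ) : 0 < sqf s :=
  Finset.prod_pos fun i _ => (Nat.prime_nth_prime i).pos

/-- Equivalence (1) ⟺ (2) of Theorem 1.4: `η(F)` is additive iff `a₀ = 0` and
`aₙ = a₁/(n−1)!` for all `n ∈ ℤ⁺`. -/
theorem stmt_8 (F : PowerSeries ℂ) (h1 : PowerSeries.coeff 1 F ≠ 0) :
    IsAddArith (eta F) ↔
      (PowerSeries.coeff 0 F = 0 ∧ ∀ n : ℕ, 0 < n →
        PowerSeries.coeff n F = PowerSeries.coeff 1 F / (Nat.factorial (n - 1) : ℂ)) := by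
  constructor
  · intro H
    have key : ∀ j k : ℕ, (Nat.factorial (j+k) : ℂ) * PowerSeries.coeff (j+k) F
        = (Nat.factorial j : ℂ) * PowerSeries.coeff j F
          + (Nat.factorial k : ℂ) * PowerSeries.coeff k F := by
      intro j k
      have hdisj : Disjoint (Finset.range j) (Finset.Ico j (j+k)) := by
        simp [Finset.disjoint_left]; omega
      have hcop : Nat.Coprime (sqf (Finset.range j)) (sqf (Finset.Ico j (j+k))) := by
        rw [← Nat.disjoint_primeFactors (sqf_pos _).ne' (sqf_pos _).ne',
          sqf_primeFactors, sqf_primeFactors]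
        exact Finset.disjoint_image (Nat.nth_injective Nat.infinite_setOf_prime) |>.2 hdisj
      have hm : sqf (Finset.range j) * sqf (Finset.Ico j (j+k)) = sqf (Finset.range (j+k)) := by
        rw [sqf, sqf, sqf, ← Finset.prod_union hdisj]
        congr 1
        rw [Finset.range_eq_Ico, Finset.range_eq_Ico]
        exact Finset.Ico_union_Ico_eq_Ico (by omega) (by omega)
      have := H _ _ (sqf_pos _) (sqf_pos _) hcop
      rw [hm] at this
      simpa [eta, sqf_card, Finset.card_range, Nat.card_Ico] using this
    have hb0 : PowerSeries.coeff 0 F = 0 := by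
      have := key 0 0
      simp at this
      rw [PowerSeries.coeff_zero_eq_constantCoeff]
      exact this
    have hbn : ∀ n : ℕ, (Nat.factorial n : ℂ) * PowerSeries.coeff n F
        = n * PowerSeries.coeff 1 F := by
      intro n
      induction n with
      | zero => simp [hb0]
      | succ m ih =>
        have := key m 1
        rw [ih] at this
        push_cast at this ⊢
        rw [this]; simp; ring
    refine ⟨hb0, fun n hn => ?_⟩
    obtain ⟨m, rfl⟩ := Nat.exists_eq_succ_of_ne_zero hn.ne'
    have h := hbn (m + 1)
    simp only [Nat.succ_sub_one]
    have hfac : (Nat.factorial m : ℂ) ≠ 0 := Nat.cast_ne_zero.2 m.factorial_ne_zero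
    rw [eq_div_iff hfac]
    rw [Nat.factorial_succ] at h
    push_cast at h
    have hm1 : ((m : ℂ) + 1) ≠ 0 := Nat.cast_add_one_ne_zero m
    rw [mul_assoc] at h
    have h2 := mul_left_cancel₀ hm1 h
    linear_combination h2
  · rintro ⟨h0, hf⟩ m n hm hn hcop
    have hmul : (m * n).primeFactors.card = m.primeFactors.card + n.primeFactors.card := by
      rw [Nat.Coprime.primeFactors_mul hcop,
        Finset.card_union_of_disjoint hcop.disjoint_primeFactors]
    have hval : ∀ k : ℕ, (Nat.factorial k : ℂ) * PowerSeries.coeff k F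
        = k * PowerSeries.coeff 1 F := by
      intro k
      cases k with
      | zero => simp [h0]
      | succ l =>
        rw [hf (l+1) (Nat.succ_pos l)]
        simp only [Nat.add_sub_cancel, Nat.factorial_succ]
        have : (Nat.factorial l : ℂ) ≠ 0 := Nat.cast_ne_zero.2 l.factorial_ne_zero
        field_simp
        push_cast
        ring
    simp only [eta, hmul]
    rw [hval, hval, hval]
    push_cast
    ring
end

section
/- (Carlitz implication (5) ⟹ (1) of Theorem 1.3.) Let F = Σ_{n≥0} a_n X^n ∈ ℂ[[X]] with a_1 ≠ 0. If Σ_{n≥0} 2^n a_n X^n = F·F (i.e. 2^n a_n = Σ_{k=0}^{n} a_k a_{n−k} for all n ≥ 0), then a_n = a_1^n / n! for all n ≥ 0. -/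
open PowerSeries

/-- Carlitz implication (5) ⟹ (1) of Theorem 1.3: if `∑ 2ⁿ aₙ Xⁿ = F·F`
then `aₙ = a₁ⁿ/n!` for all `n`. -/
theorem stmt_9 (F : PowerSeries ℂ) (h1 : PowerSeries.coeff 1 F ≠ 0)
    (h : (PowerSeries.mk fun n => (2 : ℂ) ^ n * PowerSeries.coeff n F) = F * F) :
    ∀ n : ℕ, PowerSeries.coeff n F
      = (PowerSeries.coeff 1 F) ^ n / (Nat.factorial n : ℂ) := by
  set a : ℕ → ℂ := fun n => PowerSeries.coeff n F with ha
  have key : ∀ n : ℕ, (2 : ℂ) ^ n * a n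
      = ∑ k ∈ Finset.range (n + 1), a k * a (n - k) := by
    intro n
    have := congrArg (PowerSeries.coeff n) h
    simpa [PowerSeries.coeff_mul, Finset.Nat.sum_antidiagonal_eq_sum_range_succ_mk]
      using this
  have h0 : a 0 = 1 := by
    have k1 := key 1
    rw [Finset.sum_range_succ, Finset.sum_range_succ, Finset.sum_range_zero] at k1
    have hz : (a 0 - 1) * (2 * a 1) = 0 := by
      simp only [Nat.sub_self, Nat.sub_zero] at k1
      linear_combination -k1
    rcases mul_eq_zero.mp hz with h' | h'
    · exact sub_eq_zero.mp h'
    · exact absurd (by linear_combination h' / 2) h1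
  set b : ℕ → ℂ := fun n => (a 1) ^ n / (Nat.factorial n : ℂ) with hb
  have bsum : ∀ n : ℕ, ∑ k ∈ Finset.range (n + 1), b k * b (n - k)
      = (2 : ℂ) ^ n * b n := by
    intro n
    have : ∀ k ∈ Finset.range (n + 1), b k * b (n - k)
        = (n.choose k : ℂ) * ((a 1) ^ n / (Nat.factorial n : ℂ)) := by
      intro k hk
      have hkn : k ≤ n := Nat.lt_succ_iff.mp (Finset.mem_range.mp hk)
      have hc : (n.choose k : ℂ) = (Nat.factorial n : ℂ) /
          ((Nat.factorial k : ℂ) * (Nat.factorial (n - k) : ℂ)) :=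
        Nat.cast_choose ℂ hkn
      have hpow : (a 1) ^ k * (a 1) ^ (n - k) = (a 1) ^ n := by
        rw [← pow_add, Nat.add_sub_cancel' hkn]
      have hk0 : (Nat.factorial k : ℂ) ≠ 0 := Nat.cast_ne_zero.mpr k.factorial_ne_zero
      have hnk0 : (Nat.factorial (n - k) : ℂ) ≠ 0 :=
        Nat.cast_ne_zero.mpr (n - k).factorial_ne_zero
      have hn0 : (Nat.factorial n : ℂ) ≠ 0 := Nat.cast_ne_zero.mpr n.factorial_ne_zero
      simp only [hb]
      field_simp
      rw [hpow]
      have : (n.choose k : ℂ) * ((Nat.factorial k : ℂ) * (Nat.factorial (n - k) : ℂ))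
          = (Nat.factorial n : ℂ) := by
        rw [hc]; field_simp
      linear_combination -(a 1) ^ n * this
    rw [Finset.sum_congr rfl this, ← Finset.sum_mul]
    have : ∑ k ∈ Finset.range (n + 1), (n.choose k : ℂ) = (2 : ℂ) ^ n := by
      have := Nat.sum_range_choose n
      have := congrArg (Nat.cast : ℕ → ℂ) this
      push_cast at this
      simpa using this
    rw [this, hb]
  intro n
  induction n using Nat.strong_induction_on with
  | _ n ih =>
    match n with
    | 0 => simpa [ha] using h0
    | 1 => simp
    | (m + 2) =>
      set n := m + 2 with hn
      have hmid : ∀ i ∈ Finset.range (m + 1), a (i + 1) * a (n - (i + 1))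
          = b (i + 1) * b (n - (i + 1)) := by
        intro i hi
        have hi' := Finset.mem_range.mp hi
        have e1 : a (i + 1) = b (i + 1) := ih (i + 1) (by omega)
        have e2 : a (n - (i + 1)) = b (n - (i + 1)) := ih (n - (i + 1)) (by omega)
        rw [e1, e2]
      have b0 : b 0 = 1 := by simp [hb]
      have hS : ∑ k ∈ Finset.range (n + 1), a k * a (n - k)
          = (∑ i ∈ Finset.range (m + 1), b (i + 1) * b (n - (i + 1)))
            + a n + a n := by
        rw [Finset.sum_range_succ, Finset.sum_range_succ']
        rw [Finset.sum_congr rfl hmid]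
        simp [h0]
      have hT : ∑ k ∈ Finset.range (n + 1), b k * b (n - k)
          = (∑ i ∈ Finset.range (m + 1), b (i + 1) * b (n - (i + 1)))
            + b n + b n := by
        rw [Finset.sum_range_succ, Finset.sum_range_succ']
        simp [b0]
      have heq : ((2 : ℂ) ^ n - 2) * (a n - b n) = 0 := by
        have k := key n
        have t := bsum n
        rw [hS] at k
        rw [hT] at t
        linear_combination k + t
      have h2 : ((2 : ℂ) ^ n - 2) ≠ 0 := by
        have hne : (2 : ℕ) ^ n ≠ 2 := by
          have h4 : 4 ≤ 2 ^ n := by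
            calc (4 : ℕ) = 2 ^ 2 := rfl
            _ ≤ 2 ^ n := Nat.pow_le_pow_right (by norm_num) (by omega)
          omega
        have : ((2 : ℕ) ^ n : ℂ) ≠ ((2 : ℕ) : ℂ) := by exact_mod_cast hne
        push_cast at this
        exact sub_ne_zero.mpr this
      have := (mul_eq_zero.mp heq).resolve_left h2
      have := sub_eq_zero.mp this
      simpa [hb] using this
end

section
/- (Theorem 2.3, Lambek–Carlitz characterization over the Möbius category Red of reduced matrices over GF(q), with B(n) = [n]_q!.) Let q ≥ 2 be a prime power and let F = Σ_{n≥0} a_n X^n ∈ ℂ[[X]] be a formal power series with a_1 ≠ 0. The following statements are equivalent: (1) a_n = a_1^n / [n]_q! for all n ≥ 0; (2) the function hF : ℕ → ℂ, hF(m) = a_m·[m]_q!, is binomial multiplicative, i.e. hF(m+n) = hF(m)·hF(n) for all m, n ≥ 0; (3) F ⊙_q (G·H) = (F ⊙_q G)·(F ⊙_q H) for all G, H ∈ ℂ[[X]]; (4) F ⊙_q (G·G) = (F ⊙_q G)·(F ⊙_q G) for all G ∈ ℂ[[X]]; (5) Σ_{n≥0} G_n(q)·a_n X^n = F·F, where G_n(q)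 = Σ_{k=0}^{n} [n]_q!/([k]_q!·[n−k]_q!) are the Galois numbers. -/
open PowerSeries

/-- The `q`-factorial `[n]_q! = ∏_{i=1}^{n} (1 + q + ⋯ + q^{i-1})`, with `[0]_q! = 1`. -/
def qFactorial (q n : ℕ) : ℕ :=
  ∏ i ∈ Finset.range n, ∑ j ∈ Finset.range (i + 1), q ^ j

/-- The Galois number `Gₙ(q) = ∑_{k=0}^{n} [n]_q!/([k]_q!·[n−k]_q!)` (as a complex number). -/
noncomputable def galoisNumber (q n : ℕ) : ℂ :=
  ∑ k ∈ Finset.range (n + 1),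
    (qFactorial q n : ℂ) / ((qFactorial q k : ℂ) * (qFactorial q (n - k) : ℂ))

/-- The "multiplication" `⊙_q` of formal power series:
`(∑ aₙ Xⁿ) ⊙_q (∑ bₙ Xⁿ) = ∑ [n]_q!·aₙ·bₙ Xⁿ`. -/
noncomputable def odotQ (q : ℕ) (F G : PowerSeries ℂ) : PowerSeries ℂ :=
  PowerSeries.mk fun n => (qFactorial q n : ℂ) * PowerSeries.coeff n F * PowerSeries.coeff n G

lemma qFac_pos (q n : ℕ) : 0 < qFactorial q n := by
  refine Finset.prod_pos fun i _ => ?_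
  refine Finset.sum_pos' (fun j _ => Nat.zero_le _) ⟨0, by simp, by simp⟩

lemma qFacC_ne (q n : ℕ) : (qFactorial q n : ℂ) ≠ 0 :=
  Nat.cast_ne_zero.mpr (qFac_pos q n).ne'

lemma qFac_zero (q : ℕ) : qFactorial q 0 = 1 := rfl

lemma qFac_one (q : ℕ) : qFactorial q 1 = 1 := by simp [qFactorial]

lemma odot_add (q : ℕ) (F A B : PowerSeries ℂ) :
    odotQ q F (A + B) = odotQ q F A + odotQ q F B := by
  ext n; simp [odotQ, mul_add]

lemma odot_X_pow (q : ℕ) (F : PowerSeries ℂ) (m : ℕ) :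
    odotQ q F (X ^ m)
      = ((qFactorial q m : ℂ) * PowerSeries.coeff m F) • (X ^ m : PowerSeries ℂ) := by
  ext n
  simp only [odotQ, coeff_mk, PowerSeries.coeff_smul, coeff_X_pow, smul_eq_mul]
  split_ifs with h
  · subst h; ring
  · ring

lemma g_zero (q : ℕ) : galoisNumber q 0 = 1 := by
  simp [galoisNumber, qFactorial]

lemma g_one (q : ℕ) : galoisNumber q 1 = 2 := by
  simp [galoisNumber, qFactorial, Finset.sum_range_succ]
  norm_num

lemma g_ne_two (q n : ℕ) (hn : 2 ≤ n) : galoisNumber q n ≠ 2 := by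
  set r : ℕ → ℝ := fun k =>
    (qFactorial q n : ℝ) / ((qFactorial q k : ℝ) * (qFactorial q (n - k) : ℝ)) with hr
  have hne : (qFactorial q n : ℝ) ≠ 0 := by exact_mod_cast (qFac_pos q n).ne'
  have hpos : ∀ k, 0 < r k := fun k => by
    apply div_pos
    · exact_mod_cast qFac_pos q n
    · exact mul_pos (by exact_mod_cast qFac_pos q k) (by exact_mod_cast qFac_pos q (n-k))
  have hcast : galoisNumber q n = ((∑ k ∈ Finset.range (n+1), r k : ℝ) : ℂ) := by
    rw [galoisNumber]; simp only [hr]; push_cast; rfl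
  have hpair : ∑ k ∈ ({0, n} : Finset ℕ), r k = 2 := by
    rw [Finset.sum_pair (by omega : (0:ℕ) ≠ n)]
    have r0 : r 0 = 1 := by
      simp only [hr, Nat.sub_zero, qFac_zero, Nat.cast_one, one_mul]
      exact div_self hne
    have rn : r n = 1 := by
      simp only [hr, Nat.sub_self, qFac_zero, Nat.cast_one, mul_one]
      exact div_self hne
    rw [r0, rn]; norm_num
  have hlt : (2 : ℝ) < ∑ k ∈ Finset.range (n+1), r k := by
    rw [← hpair]
    refine Finset.sum_lt_sum_of_subset (i := 1) ?_ (Finset.mem_range.mpr (by omega)) ?_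
      (hpos 1) (fun j _ _ => (hpos j).le)
    · intro x hx
      rcases Finset.mem_insert.mp hx with rfl | hx
      · exact Finset.mem_range.mpr (by omega)
      · rw [Finset.mem_singleton] at hx; subst hx
        exact Finset.mem_range.mpr (by omega)
    · simp only [Finset.mem_insert, Finset.mem_singleton]
      push_neg
      exact ⟨one_ne_zero, by omega⟩
  rw [hcast]
  intro h
  have : (∑ k ∈ Finset.range (n+1), r k) = 2 := by exact_mod_cast h
  linarith

/-- Theorem 2.3: Lambek–Carlitz characterization over the Möbius category `Red`
of reduced matrices over `GF(q)`, whose parameters are `B(n) = [n]_q!`. -/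
theorem stmt_10 (q : ℕ) (hq : IsPrimePow q) (hq2 : 2 ≤ q)
    (F : PowerSeries ℂ) (h1 : PowerSeries.coeff 1 F ≠ 0) :
    [(∀ n : ℕ, PowerSeries.coeff n F
        = (PowerSeries.coeff 1 F) ^ n / (qFactorial q n : ℂ)),
     (∀ m n : ℕ,
        PowerSeries.coeff (m + n) F * (qFactorial q (m + n) : ℂ)
          = (PowerSeries.coeff m F * (qFactorial q m : ℂ))
              * (PowerSeries.coeff n F * (qFactorial q n : ℂ))),
     (∀ G H : PowerSeries ℂ, odotQ q F (G * H) = odotQ q F G * odotQ q F H),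
     (∀ G : PowerSeries ℂ, odotQ q F (G * G) = odotQ q F G * odotQ q F G),
     (PowerSeries.mk fun n => galoisNumber q n * PowerSeries.coeff n F) = F * F].TFAE := by
  have two_ne : (2 : PowerSeries ℂ) ≠ 0 := by
    intro h
    have := congrArg (PowerSeries.coeff 0) h
    simp [map_ofNat] at this
  tfae_have 1 → 2 := by
    intro h m n
    rw [h (m+n), h m, h n, div_mul_cancel₀ _ (qFacC_ne q _), div_mul_cancel₀ _ (qFacC_ne q _),
      div_mul_cancel₀ _ (qFacC_ne q _), pow_add]
  tfae_have 2 → 3 := by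
    intro h G H
    ext n
    simp only [odotQ, coeff_mk, coeff_mul, Finset.mul_sum]
    apply Finset.sum_congr rfl
    intro p hp
    rw [Finset.HasAntidiagonal.mem_antidiagonal] at hp
    have e := h p.1 p.2
    rw [hp] at e
    linear_combination (PowerSeries.coeff p.1 G * PowerSeries.coeff p.2 H) * e
  tfae_have 3 → 4 := fun h G => h G G
  tfae_have 4 → 3 := by
    intro h G H
    have e := h (G + H)
    rw [show (G + H) * (G + H) = G * G + G * H + (H * G + H * H) by ring,
      odot_add, odot_add, odot_add, h G, h H, mul_comm H G, odot_add q F G H] at e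
    have e2 : (2 : PowerSeries ℂ) * odotQ q F (G * H)
        = 2 * (odotQ q F G * odotQ q F H) := by linear_combination e
    exact mul_left_cancel₀ two_ne e2
  tfae_have 3 → 2 := by
    intro h m n
    have e := h (X ^ m) (X ^ n)
    rw [odot_X_pow, odot_X_pow, smul_mul_smul_comm,
      show (X : PowerSeries ℂ) ^ m * X ^ n = X ^ (m + n) from (pow_add X m n).symm,
      odot_X_pow] at e
    have e2 := congrArg (PowerSeries.coeff (m + n)) e
    simp only [PowerSeries.coeff_smul, coeff_X_pow, if_pos rfl, smul_eq_mul, mul_one,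
      if_true] at e2
    linear_combination e2
  tfae_have 2 → 5 := by
    intro h
    ext n
    rw [coeff_mk, coeff_mul, Finset.Nat.sum_antidiagonal_eq_sum_range_succ_mk, galoisNumber,
      Finset.sum_mul]
    apply Finset.sum_congr rfl
    intro k hk
    rw [Finset.mem_range, Nat.lt_succ_iff] at hk
    have e := h k (n - k)
    rw [Nat.add_sub_cancel' hk] at e
    have hk1 := qFacC_ne q k
    have hk2 := qFacC_ne q (n - k)
    field_simp
    linear_combination e
  tfae_have 5 → 1 := by
    intro h5 n
    have key : ∀ m : ℕ, galoisNumber q m * PowerSeries.coeff m F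
        = ∑ k ∈ Finset.range (m+1), PowerSeries.coeff k F * PowerSeries.coeff (m-k) F := by
      intro m
      have := congrArg (PowerSeries.coeff m) h5
      rwa [coeff_mk, coeff_mul, Finset.Nat.sum_antidiagonal_eq_sum_range_succ_mk] at this
    have ha0 : PowerSeries.coeff 0 F = 1 := by
      have e := key 1
      rw [g_one] at e
      simp only [Finset.sum_range_succ, Finset.sum_range_one, Nat.sub_zero, Nat.sub_self] at e
      have e2 : PowerSeries.coeff 1 F * 2
          = PowerSeries.coeff 1 F * (PowerSeries.coeff 0 F * 2) := by linear_combination e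
      have e3 := mul_left_cancel₀ h1 e2
      linear_combination -e3 / 2
    induction n using Nat.strong_induction_on with
    | _ n ih =>
      match n with
      | 0 => simpa [qFac_zero] using ha0
      | 1 => simp [qFac_one]
      | (m+2) =>
        have e := key (m+2)
        rw [Finset.sum_range_succ, Finset.sum_range_succ'] at e
        simp only [Nat.sub_self, Nat.sub_zero, ha0, one_mul, mul_one] at e
        have hS : ∀ k ∈ Finset.range (m+1),
            PowerSeries.coeff (k+1) F * PowerSeries.coeff (m+2-(k+1)) F
              = (qFactorial q (m+2) : ℂ)
                  / ((qFactorial q (k+1) : ℂ) * (qFactorial q (m+2-(k+1)) : ℂ))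
                * ((PowerSeries.coeff 1 F)^(m+2) / (qFactorial q (m+2) : ℂ)) := by
          intro k hk
          rw [Finset.mem_range] at hk
          rw [ih (k+1) (by omega), ih (m+2-(k+1)) (by omega), div_mul_div_comm, ← pow_add,
            show (k+1)+(m+2-(k+1)) = m+2 by omega]
          have h3' := qFacC_ne q (m+2)
          rw [div_mul_div_comm, mul_comm (qFactorial q (m+2) : ℂ),
            mul_div_mul_right _ _ h3']
        rw [Finset.sum_congr rfl hS, ← Finset.sum_mul] at e
        have hG2 : galoisNumber q (m+2)
            = (∑ k ∈ Finset.range (m+1), (qFactorial q (m+2) : ℂ)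
                / ((qFactorial q (k+1) : ℂ) * (qFactorial q (m+2-(k+1)) : ℂ))) + 2 := by
          rw [galoisNumber, Finset.sum_range_succ, Finset.sum_range_succ', Nat.sub_self,
            Nat.sub_zero, qFac_zero]
          push_cast
          rw [one_mul, mul_one, div_self (qFacC_ne q (m+2))]
          ring
        have hne2 : galoisNumber q (m+2) - 2 ≠ 0 :=
          sub_ne_zero.mpr (g_ne_two q (m+2) (by omega))
        apply mul_left_cancel₀ hne2
        rw [hG2] at e ⊢
        linear_combination e
  tfae_finish
end

section
/- (Theorem 2.2 instantiated at the elementary Möbius category of full binomial type, with parameters B(n) = 1 for all n.) Let F = Σ_{n≥0} a_n X^n ∈ ℂ[[X]] be a formal power series with a_1 ≠ 0. The following statements are equivalent: (1) a_n = n·a_1 for all n ≥ 0; (2) the function hF : ℕ → ℂ, hF(m) = a_m, is binomial additive, i.e. a_{m+n} = a_m + a_n for all m, n ≥ 0; (3) F ⊙₁ (G·H) = (F ⊙₁ G)·H + (F ⊙₁ H)·G for all G, H ∈ ℂ[[X]]; (4) F ⊙₁ (G·G) = 2·(F ⊙₁ G)·G for all G ∈ ℂ[[X]]; (5) Σ_{n≥0}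 (n+1)·a_n X^n = 2·(Σ_{n≥0} X^n)·F. -/
open PowerSeries

/-- The Hadamard (coefficientwise) product `⊙₁` of formal power series,
i.e. the `⊙_ℳ` multiplication of the elementary Möbius category of full
binomial type, whose parameters are `B(n) = 1`. -/
noncomputable def odotOne (F G : PowerSeries ℂ) : PowerSeries ℂ :=
  PowerSeries.mk fun n => PowerSeries.coeff n F * PowerSeries.coeff n G

/-- Theorem 2.2 instantiated at the elementary Möbius category of full binomial
type (with `B(n) = 1`, so `t(n) = n + 1`): additive Lambek–Carlitz
characterization of the series `∑ n·a₁ Xⁿ`. -/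
theorem stmt_14 (F : PowerSeries ℂ) (h1 : PowerSeries.coeff 1 F ≠ 0) :
    [(∀ n : ℕ, PowerSeries.coeff n F = (n : ℂ) * PowerSeries.coeff 1 F),
     (∀ m n : ℕ, PowerSeries.coeff (m + n) F
        = PowerSeries.coeff m F + PowerSeries.coeff n F),
     (∀ G H : PowerSeries ℂ, odotOne F (G * H) = odotOne F G * H + odotOne F H * G),
     (∀ G : PowerSeries ℂ, odotOne F (G * G) = 2 * odotOne F G * G),
     (PowerSeries.mk fun n => ((n : ℂ) + 1) * PowerSeries.coeff n F)
        = 2 * (PowerSeries.mk fun _ => (1 : ℂ)) * F].TFAE := by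
  tfae_have 1 → 2
  · intro h m n
    rw [h (m + n), h m, h n]
    push_cast
    ring
  tfae_have 2 → 3
  · intro h G H
    ext n
    simp only [odotOne, coeff_mk, coeff_mul, map_add, Finset.mul_sum]
    rw [← Finset.Nat.sum_antidiagonal_swap
      (f := fun p => PowerSeries.coeff p.1 F * PowerSeries.coeff p.1 H
        * PowerSeries.coeff p.2 G)]
    simp only [Prod.fst_swap, Prod.snd_swap]
    rw [← Finset.sum_add_distrib]
    apply Finset.sum_congr rfl
    intro p hp
    have hpn := Finset.HasAntidiagonal.mem_antidiagonal.mp hp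
    rw [← hpn, h p.1 p.2]
    ring
  tfae_have 3 → 4
  · intro h G
    rw [h G G]
    ring
  tfae_have 4 → 5
  · intro h
    have key := h (PowerSeries.mk fun _ => (1 : ℂ))
    have e1 : odotOne F (PowerSeries.mk fun _ => (1 : ℂ)) = F := by
      ext n; simp [odotOne]
    have e2 : odotOne F ((PowerSeries.mk fun _ => (1 : ℂ)) * (PowerSeries.mk fun _ => (1 : ℂ)))
        = PowerSeries.mk fun n => ((n : ℂ) + 1) * PowerSeries.coeff n F := by
      ext n
      simp [odotOne, coeff_mul, Finset.Nat.card_antidiagonal]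
      ring
    rw [e1] at key
    rw [← e2, key]
    ring
  tfae_have 5 → 1
  · intro h
    have key : ∀ n : ℕ, ((n : ℂ) + 1) * PowerSeries.coeff n F
        = 2 * ∑ i ∈ Finset.range (n + 1), PowerSeries.coeff i F := by
      intro n
      have := congrArg (PowerSeries.coeff n) h
      simp only [coeff_mk] at this
      rw [this]
      have : (2 : PowerSeries ℂ) * (PowerSeries.mk fun _ => (1 : ℂ)) * F
          = (PowerSeries.mk fun _ => (1 : ℂ)) * F + (PowerSeries.mk fun _ => (1 : ℂ)) * F := by
        ring
      rw [this, map_add, coeff_mul]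
      rw [Finset.Nat.sum_antidiagonal_eq_sum_range_succ_mk]
      simp only [coeff_mk, one_mul]
      rw [← Finset.sum_range_reflect]
      have hr : ∀ j ∈ Finset.range (Nat.succ n),
          PowerSeries.coeff (n - (Nat.succ n - 1 - j)) F = PowerSeries.coeff j F := by
        intro j hj
        have hj' := Finset.mem_range.mp hj
        have he : n - (Nat.succ n - 1 - j) = j := by omega
        rw [he]
      rw [Finset.sum_congr rfl hr]
      ring
    -- difference relation : n * a (n+1) = (n+1) * a n
    have rel : ∀ n : ℕ, (n : ℂ) * PowerSeries.coeff (n + 1) F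
        = ((n : ℂ) + 1) * PowerSeries.coeff n F := by
      intro n
      have k1 := key (n + 1)
      have k2 := key n
      rw [Finset.sum_range_succ] at k1
      push_cast at k1
      linear_combination k1 - k2
    intro n
    induction n with
    | zero =>
      have h0 := key 0
      rw [Finset.sum_range_one] at h0
      push_cast at h0
      simp only [Nat.cast_zero, zero_mul]
      linear_combination -h0
    | succ n ih =>
      rcases Nat.eq_zero_or_pos n with hn | hn
      · subst hn; norm_num
      · have hrel := rel n
        rw [ih] at hrel
        have hne : (n : ℂ) ≠ 0 := Nat.cast_ne_zero.mpr (by omega)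
        have : PowerSeries.coeff (n + 1) F
            = ((n : ℂ) + 1) * PowerSeries.coeff 1 F := by
          refine mul_left_cancel₀ hne ?_
          linear_combination hrel
        rw [this]
        push_cast
        ring
  tfae_finish
end
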